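/- The dimension of the center of the twisted group algebra ℂ^α G equals the number of α-regular conjugacy classes of G. In particular, if α is cohomologically trivial then all elements of G are α-regular and dim Z(ℂ^α G) equals the number of conjugacy classes of G. -/

import Mathlib

/-- The 2-cocycle condition for `α : G × G → ℂˣ` (trivial action). -/
def IsCocycle {G : Type*} [Group G] {R : Type*} [CommRing R] (α : G → G → Rˣ) : Prop :=
  ∀ g h k : G, α g h * α (g * h) k = α h k * α g (h * k)

/-- `A` is a twisted group ring `R^α G`: it has an `R`-basis `{u_g}_{g ∈ G}` with
`u_g u_h = α(g,h) u_{gh}`. -/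
structure TwistedGroupAlgebraOn (R : Type*) [CommRing R] (G : Type*) [Group G]
    (A : Type*) [Ring A] [Algebra R A] (α : G → G → Rˣ) where
  b : Module.Basis G R A
  b_mul : ∀ g h : G, b g * b h = (α g h : R) • b (g * h)

/-- `g` is `α`-regular: in `ℂ^α G`, `u_g` commutes with `u_h` for every `h`
centralizing `g`. -/
def IsAlphaRegular {G : Type*} [Group G] {A : Type*} [Ring A] [Algebra ℂ A]
    {α : G → G → ℂˣ} (S : TwistedGroupAlgebraOn ℂ G A α) (g : G) : Prop :=
  ∀ h : G, h * g = g * h → S.b g * S.b h = S.b h * S.b g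

section Aux
variable {G : Type*} [Group G] {A : Type*} [Ring A] [Algebra ℂ A]
  {α : G → G → ℂˣ} (hα : IsCocycle α) (S : TwistedGroupAlgebraOn ℂ G A α)

include hα

lemma alpha_one_left (k : G) : α 1 k = α 1 1 := by
  have h := hα 1 1 k
  simp only [one_mul] at h
  exact (mul_right_cancel h).symm

lemma alpha_one_right (g : G) : α g 1 = α 1 1 := by
  have h := hα g 1 1
  simp only [mul_one, one_mul] at h
  have := mul_right_cancel h
  rw [this, alpha_one_left hα]

lemma alpha_inv (g : G) : α g g⁻¹ = α g⁻¹ g := by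
  have h := hα g g⁻¹ g
  simp only [mul_inv_cancel, inv_mul_cancel, alpha_one_left hα g, alpha_one_right hα g] at h
  exact mul_right_cancel h

lemma b_one : S.b 1 = (α 1 1 : ℂ) • (1 : A) := by
  set e : A := ((α 1 1 : ℂ))⁻¹ • S.b 1 with he
  have he1 : ∀ g : G, e * S.b g = S.b g := by
    intro g
    rw [he, smul_mul_assoc, S.b_mul, alpha_one_left hα g, one_mul, smul_smul,
      inv_mul_cancel₀ (α 1 1).ne_zero, one_smul]
  have key : (LinearMap.mulLeft ℂ e) = LinearMap.id := by
    apply S.b.ext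
    intro g
    simpa using he1 g
  have : e * 1 = 1 := by
    have := congrArg (fun f => f 1) key
    simpa using this
  rw [mul_one] at this
  rw [he] at this
  rw [← this, smul_smul, mul_inv_cancel₀ (α 1 1).ne_zero, one_smul]

/-- the element `u_g` as a unit of `A`. -/
noncomputable def U (g : G) : Aˣ where
  val := S.b g
  inv := (((α g g⁻¹ : ℂ) * (α 1 1 : ℂ))⁻¹) • S.b g⁻¹
  val_inv := by
    rw [mul_smul_comm, S.b_mul, mul_inv_cancel, b_one hα S, smul_smul, smul_smul]
    have h1 : ((α g g⁻¹ :ℂ) * (α 1 1:ℂ))⁻¹ * ↑(α g g⁻¹) * ↑(α 1 1) = 1 := by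
      field_simp
    rw [h1, one_smul]
  inv_val := by
    rw [smul_mul_assoc, S.b_mul, inv_mul_cancel, b_one hα S, smul_smul, smul_smul,
      alpha_inv hα g]
    have h1 : ((α g⁻¹ g :ℂ) * (α 1 1:ℂ))⁻¹ * ↑(α g⁻¹ g) * ↑(α 1 1) = 1 := by
      field_simp
    rw [h1, one_smul]

lemma U_val (g : G) : (U hα S g : A) = S.b g := rfl

lemma U_mul (g h : G) :
    U hα S g * U hα S h =
      (Units.map (algebraMap ℂ A : ℂ →* A) (α g h)) * U hα S (g * h) := by
  ext
  push_cast [U_val]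
  rw [S.b_mul, Algebra.smul_def]
  rfl

/-- conjugation by `u_t`. -/
noncomputable def cnj (t : G) (a : A) : A := ↑(U hα S t) * a * ↑(U hα S t)⁻¹

lemma cnj_cnj (g h : G) (a : A) :
    cnj hα S g (cnj hα S h a) = cnj hα S (g * h) a := by
  unfold cnj
  have key : ∀ (u v : Aˣ), (↑u * (↑v * a * ↑v⁻¹) * ↑u⁻¹ : A) = ↑(u * v) * a * ↑(u * v)⁻¹ := by
    intro u v
    rw [mul_inv_rev, Units.val_mul, Units.val_mul]
    noncomm_ring
  rw [key, U_mul hα S g h, mul_inv_rev, Units.val_mul, Units.val_mul]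
  set s : Aˣ := Units.map (algebraMap ℂ A : ℂ →* A) (α g h) with hs
  have hsc : ∀ x : A, (↑s : A) * x = x * ↑s := by
    intro x
    rw [hs]
    simp only [Units.coe_map, MonoidHom.coe_coe]
    exact (Algebra.commutes _ _)
  calc ↑s * ↑(U hα S (g*h)) * a * (↑(U hα S (g*h))⁻¹ * ↑s⁻¹)
      = ↑s * (↑(U hα S (g*h)) * a * ↑(U hα S (g*h))⁻¹) * ↑s⁻¹ := by noncomm_ring
    _ = (↑(U hα S (g*h)) * a * ↑(U hα S (g*h))⁻¹) * (↑s * ↑s⁻¹) := by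
        rw [hsc]; noncomm_ring
    _ = ↑(U hα S (g*h)) * a * ↑(U hα S (g*h))⁻¹ := by rw [Units.mul_inv, mul_one]

/-- the scalar in `u_t u_x u_t⁻¹ = γ(t,x) u_{t x t⁻¹}`. -/
noncomputable def gam (α : G → G → ℂˣ) (t x : G) : ℂ :=
  (α t x : ℂ) * (α (t*x) t⁻¹ : ℂ) * (((α t t⁻¹ : ℂ) * (α 1 1 : ℂ))⁻¹)

lemma cnj_b (t x : G) :
    cnj hα S t (S.b x) = gam α t x • S.b (t * x * t⁻¹) := by
  unfold cnj gam
  show S.b t * S.b x * ((((α t t⁻¹ : ℂ) * (α 1 1 : ℂ))⁻¹) • S.b t⁻¹) = _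
  rw [S.b_mul, smul_mul_assoc, mul_smul_comm, S.b_mul, smul_smul, smul_smul]
  ring_nf

lemma cnj_b_of_comm (t x : G) (hx : IsAlphaRegular S x) (ht : t * x = x * t) :
    cnj hα S t (S.b x) = S.b x := by
  unfold cnj
  rw [U_val, ← hx t ht, ← U_val hα S t, mul_assoc, Units.mul_inv, mul_one]

lemma gam_eq_one (t x : G) (hx : IsAlphaRegular S x) (ht : t * x = x * t) :
    gam α t x = 1 := by
  have h1 : gam α t x • S.b (t * x * t⁻¹) = S.b x := by
    rw [← cnj_b hα S, cnj_b_of_comm hα S t x hx ht]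
  have h2 : t * x * t⁻¹ = x := by rw [ht, mul_inv_cancel_right]
  rw [h2] at h1
  have := congrArg (fun a => S.b.repr a x) h1
  simpa using this

end Aux

section Aux2
open scoped Classical
variable {G : Type*} [Group G] [Fintype G] {A : Type*} [Ring A] [Algebra ℂ A]
  {α : G → G → ℂˣ} (hα : IsCocycle α) (S : TwistedGroupAlgebraOn ℂ G A α)

include hα

open scoped Classical in
/-- the `α`-twisted class sum of `x`, summed over the whole group. -/
noncomputable def classSum (x : G) : A := ∑ t : G, cnj hα S t (S.b x)

lemma cnj_classSum (h : G) (x : G) :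
    cnj hα S h (classSum hα S x) = classSum hα S x := by
  unfold classSum cnj
  rw [Finset.mul_sum, Finset.sum_mul]
  have : ∀ t : G, ↑(U hα S h) * cnj hα S t (S.b x) * ↑(U hα S h)⁻¹
      = cnj hα S (h * t) (S.b x) := fun t => cnj_cnj hα S h t (S.b x)
  calc (∑ t : G, ↑(U hα S h) * cnj hα S t (S.b x) * ↑(U hα S h)⁻¹)
      = ∑ t : G, cnj hα S (h * t) (S.b x) := Finset.sum_congr rfl fun t _ => this t
    _ = ∑ t : G, cnj hα S t (S.b x) := Fintype.sum_equiv (Equiv.mulLeft h) _ _ (fun t => rfl)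

lemma classSum_mem_center (x : G) : classSum hα S x ∈ Subalgebra.center ℂ A := by
  rw [Subalgebra.mem_center_iff]
  have hb : ∀ h : G, S.b h * classSum hα S x = classSum hα S x * S.b h := by
    intro h
    have := cnj_classSum hα S h x
    unfold cnj at this
    have h2 := congrArg (fun a => a * (↑(U hα S h) : A)) this
    simp only [mul_assoc, Units.inv_mul, mul_one] at h2
    simpa [U_val] using h2
  intro a
  have key : LinearMap.mulRight ℂ (classSum hα S x) = LinearMap.mulLeft ℂ (classSum hα S x) := by
    apply S.b.ext
    intro g
    simpa using (hb g)
  have := congrArg (fun f => f a) key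
  simpa using this

lemma repr_classSum (x y : G) :
    S.b.repr (classSum hα S x) y = ∑ t : G, if t * x * t⁻¹ = y then gam α t x else 0 := by
  unfold classSum
  rw [map_sum, Finsupp.coe_finset_sum, Finset.sum_apply]
  refine Finset.sum_congr rfl fun t _ => ?_
  rw [cnj_b hα S, map_smul, S.b.repr_self]
  simp [Finsupp.single_apply, smul_eq_mul, mul_ite]

lemma repr_classSum_of_not_conj (x y : G) (hxy : ¬ IsConj x y) :
    S.b.repr (classSum hα S x) y = 0 := by
  rw [repr_classSum hα S]
  refine Finset.sum_eq_zero fun t _ => ?_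
  rw [if_neg]
  intro hc
  exact hxy (isConj_iff.mpr ⟨t, hc⟩)

lemma repr_classSum_self (x : G) (hx : IsAlphaRegular S x) :
    S.b.repr (classSum hα S x) x ≠ 0 := by
  rw [repr_classSum hα S]
  have : ∀ t : G, (if t * x * t⁻¹ = x then gam α t x else 0)
      = if t * x * t⁻¹ = x then (1:ℂ) else 0 := by
    intro t
    by_cases h : t * x * t⁻¹ = x
    · rw [if_pos h, if_pos h, gam_eq_one hα S t x hx (mul_inv_eq_iff_eq_mul.mp h)]
    · rw [if_neg h, if_neg h]
  rw [Finset.sum_congr rfl fun t _ => this t, Finset.sum_boole]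
  have hmem : (1:G) ∈ Finset.univ.filter (fun t => t * x * t⁻¹ = x) := by
    simp
  have hpos := Finset.card_pos.mpr ⟨1, hmem⟩
  exact Nat.cast_ne_zero.mpr hpos.ne'


lemma repr_basis_mul (z : A) (h k : G) :
    S.b.repr (S.b h * z) k = (α h (h⁻¹ * k) : ℂ) * S.b.repr z (h⁻¹ * k) := by
  conv_lhs => rw [← S.b.sum_repr z]
  rw [Finset.mul_sum]
  have step : ∀ g : G, S.b h * (S.b.repr z g • S.b g)
      = ((α h g : ℂ) * S.b.repr z g) • S.b (h * g) := by
    intro g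
    rw [mul_smul_comm, S.b_mul, smul_smul, mul_comm (S.b.repr z g)]
  rw [Finset.sum_congr rfl fun g _ => step g, map_sum, Finsupp.coe_finset_sum,
    Finset.sum_apply]
  rw [Finset.sum_eq_single (h⁻¹ * k)]
  · rw [map_smul, S.b.repr_self, mul_inv_cancel_left]
    simp
  · intro g _ hg
    rw [map_smul, S.b.repr_self]
    have : h * g ≠ k := by
      intro hc; exact hg (by rw [← hc, inv_mul_cancel_left])
    simp [Finsupp.single_apply, this]
  · intro hc; exact absurd (Finset.mem_univ _) hc

lemma repr_mul_basis (z : A) (h k : G) :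
    S.b.repr (z * S.b h) k = (α (k * h⁻¹) h : ℂ) * S.b.repr z (k * h⁻¹) := by
  conv_lhs => rw [← S.b.sum_repr z]
  rw [Finset.sum_mul]
  have step : ∀ g : G, (S.b.repr z g • S.b g) * S.b h
      = ((α g h : ℂ) * S.b.repr z g) • S.b (g * h) := by
    intro g
    rw [smul_mul_assoc, S.b_mul, smul_smul, mul_comm (S.b.repr z g)]
  rw [Finset.sum_congr rfl fun g _ => step g, map_sum, Finsupp.coe_finset_sum,
    Finset.sum_apply]
  rw [Finset.sum_eq_single (k * h⁻¹)]
  · rw [map_smul, S.b.repr_self, inv_mul_cancel_right]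
    simp
  · intro g _ hg
    rw [map_smul, S.b.repr_self]
    have : g * h ≠ k := by
      intro hc; exact hg (by rw [← hc, mul_inv_cancel_right])
    simp [Finsupp.single_apply, this]
  · intro hc; exact absurd (Finset.mem_univ _) hc

lemma central_coeff_rel (z : A) (hz : ∀ a : A, a * z = z * a) (x h : G) :
    (α h (h⁻¹ * x * h) : ℂ) * S.b.repr z (h⁻¹ * x * h) = (α x h : ℂ) * S.b.repr z x := by
  have h1 := repr_basis_mul hα S z h (x * h)
  have h2 := repr_mul_basis hα S z h (x * h)
  rw [hz (S.b h), h2] at h1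
  rw [mul_inv_cancel_right] at h1
  rw [← mul_assoc] at h1
  exact h1.symm

lemma coeff_conj_zero (z : A) (hz : ∀ a : A, a * z = z * a) (x h : G)
    (h0 : S.b.repr z x = 0) : S.b.repr z (h⁻¹ * x * h) = 0 := by
  have := central_coeff_rel hα S z hz x h
  rw [h0, mul_zero] at this
  exact (mul_eq_zero.mp this).resolve_left (α h (h⁻¹ * x * h)).ne_zero

lemma coeff_zero_of_not_regular (z : A) (hz : ∀ a : A, a * z = z * a) (x : G)
    (hx : ¬ IsAlphaRegular S x) : S.b.repr z x = 0 := by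
  rw [IsAlphaRegular] at hx
  push_neg at hx
  obtain ⟨h, hcomm, hne⟩ := hx
  have hαne : (α h x : ℂ) ≠ (α x h : ℂ) := by
    intro he
    apply hne
    rw [S.b_mul, S.b_mul, hcomm, he]
  have key := central_coeff_rel hα S z hz x h
  have hx2 : h⁻¹ * x * h = x := by
    rw [mul_assoc, ← hcomm, inv_mul_cancel_left]
  rw [hx2] at key
  by_contra h0
  exact hαne (mul_right_cancel₀ h0 key)

end Aux2


/-- The dimension of the center of the twisted group algebra `ℂ^α G`
equals the number of `α`-regular conjugacy classes of `G`. In particular, if `α` is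
cohomologically trivial then every element of `G` is `α`-regular and the dimension of
the center equals the number of conjugacy classes of `G`. -/
theorem center_dim_eq_regular_classes {G : Type*} [Group G] [Fintype G]
    {A : Type*} [Ring A] [Algebra ℂ A]
    (α : G → G → ℂˣ) (hα : IsCocycle α) (S : TwistedGroupAlgebraOn ℂ G A α) :
    Module.finrank ℂ (Subalgebra.center ℂ A) =
      Nat.card {c : ConjClasses G // ∃ g : G, ConjClasses.mk g = c ∧ IsAlphaRegular S g} ∧
    (∀ δ : G → ℂˣ, (∀ g h : G, α g h = δ g * δ h * (δ (g * h))⁻¹) →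
      (∀ g : G, IsAlphaRegular S g) ∧
      Module.finrank ℂ (Subalgebra.center ℂ A) = Nat.card (ConjClasses G)) := by
  classical
  have main : Module.finrank ℂ (Subalgebra.center ℂ A) =
      Nat.card {c : ConjClasses G // ∃ g : G, ConjClasses.mk g = c ∧ IsAlphaRegular S g} := by
    have hrep : ∀ c : {c : ConjClasses G // ∃ g : G, ConjClasses.mk g = c ∧ IsAlphaRegular S g},
        ∃ g : G, ConjClasses.mk g = c.1 ∧ IsAlphaRegular S g := fun c => c.2
    choose rep hmk hreg using hrep
    have hfin1 : Finite (ConjClasses G) := Quotient.finite _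
    have hfin2 : Fintype {c : ConjClasses G // ∃ g : G, ConjClasses.mk g = c ∧ IsAlphaRegular S g} :=
      Fintype.ofFinite _
    let Φ : Subalgebra.center ℂ A →ₗ[ℂ]
        ({c : ConjClasses G // ∃ g : G, ConjClasses.mk g = c ∧ IsAlphaRegular S g} → ℂ) :=
      { toFun := fun z c => S.b.repr (z : A) (rep c)
        map_add' := by intro z w; funext c; simp
        map_smul' := by intro r z; funext c; simp }
    have hker : ∀ z : Subalgebra.center ℂ A, Φ z = 0 → z = 0 := by
      intro z h0
      have hzc : ∀ a : A, a * (z : A) = (z : A) * a :=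
        fun a => Subalgebra.mem_center_iff.mp z.2 a
      have hall : ∀ g : G, S.b.repr (z : A) g = 0 := by
        intro g
        by_cases hg : IsAlphaRegular S g
        · set c : {c : ConjClasses G // ∃ g : G, ConjClasses.mk g = c ∧ IsAlphaRegular S g} :=
            ⟨ConjClasses.mk g, g, rfl, hg⟩ with hc
          have h1 : S.b.repr (z : A) (rep c) = 0 := congrFun h0 c
          have h3 : IsConj (rep c) g := ConjClasses.mk_eq_mk_iff_isConj.mp (hmk c)
          obtain ⟨u, hu⟩ := isConj_iff.mp h3
          have h4 := coeff_conj_zero hα S (z : A) hzc (rep c) u⁻¹ h1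
          rw [inv_inv, hu] at h4
          exact h4
        · exact coeff_zero_of_not_regular hα S _ hzc g hg
      have : S.b.repr (z : A) = 0 := by
        ext g; simpa using hall g
      have hz0 : (z : A) = 0 := by
        have := S.b.repr.map_eq_zero_iff.mp this
        exact this
      exact Subtype.ext hz0
    have hΦinj : Function.Injective Φ := by
      intro z w h
      have := hker (z - w) (by rw [map_sub, h, sub_self])
      exact sub_eq_zero.mp this
    have hΦsurj : Function.Surjective Φ := by
      intro f
      set n : {c : ConjClasses G // ∃ g : G, ConjClasses.mk g = c ∧ IsAlphaRegular S g} → ℂ :=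
        fun c => S.b.repr (classSum hα S (rep c)) (rep c) with hn'
      have hn : ∀ c, n c ≠ 0 := fun c => repr_classSum_self hα S (rep c) (hreg c)
      refine ⟨∑ c, (f c / n c) •
        (⟨classSum hα S (rep c), classSum_mem_center hα S (rep c)⟩ :
          Subalgebra.center ℂ A), ?_⟩
      funext c'
      rw [map_sum]
      have : ∀ c, (Φ ((f c / n c) •
          (⟨classSum hα S (rep c), classSum_mem_center hα S (rep c)⟩ :
            Subalgebra.center ℂ A))) c'
          = (f c / n c) * S.b.repr (classSum hα S (rep c)) (rep c') := by
        intro c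
        rw [map_smul]
        simp [Φ]
      rw [Finset.sum_apply, Finset.sum_congr rfl fun c _ => this c,
        Finset.sum_eq_single c']
      · exact div_mul_cancel₀ (f c') (hn c')
      · intro c _ hcc
        have hnc : ¬ IsConj (rep c) (rep c') := by
          intro hconj
          apply hcc
          apply Subtype.ext
          rw [← hmk c, ← hmk c']
          exact ConjClasses.mk_eq_mk_iff_isConj.mpr hconj
        rw [repr_classSum_of_not_conj hα S _ _ hnc, mul_zero]
      · intro hc; exact absurd (Finset.mem_univ _) hc
    have e : Subalgebra.center ℂ A ≃ₗ[ℂ]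
        ({c : ConjClasses G // ∃ g : G, ConjClasses.mk g = c ∧ IsAlphaRegular S g} → ℂ) :=
      LinearEquiv.ofBijective Φ ⟨hΦinj, hΦsurj⟩
    rw [e.finrank_eq, Module.finrank_pi, Nat.card_eq_fintype_card]
  refine ⟨main, ?_⟩
  intro δ hδ
  have hregall : ∀ g : G, IsAlphaRegular S g := by
    intro g h hh
    rw [S.b_mul, S.b_mul, hh]
    congr 2
    have h2 := hδ h g
    rw [hh] at h2
    rw [hδ g h, h2, mul_comm (δ g) (δ h)]
  refine ⟨hregall, ?_⟩
  rw [main]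
  apply Nat.card_congr
  exact Equiv.subtypeUnivEquiv (fun c => by
    obtain ⟨g, hg⟩ := ConjClasses.mk_surjective c
    exact ⟨g, hg, hregall g⟩)
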